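/- For all x > 0, (1 − e^{−x})(1 − e^{−1/x})·(1/x + x) ≤ 1. -/

import Mathlib

open Real

private lemma exp_neg_le_quad (s : ℝ) (hs : 0 ≤ s) : exp (-s) ≤ 1 - s + s^2/2 := by
  have key : MonotoneOn (fun u : ℝ => 1 - u + u^2/2 - exp (-u)) (Set.Ici 0) := by
    apply monotoneOn_of_deriv_nonneg (convex_Ici 0)
    · fun_prop
    · apply Differentiable.differentiableOn; fun_prop
    · intro u hu
      have h1 : HasDerivAt (fun u : ℝ => exp (-u)) (exp (-u) * (-1)) u :=
        (hasDerivAt_neg u).exp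
      have h2 : HasDerivAt (fun u : ℝ => 1 - u + u^2/2) (-1 + (2:ℕ) * u ^ 1 / 2) u :=
        ((hasDerivAt_id u).const_sub (1:ℝ)).add ((hasDerivAt_pow 2 u).div_const 2)
      have h : HasDerivAt (fun u : ℝ => 1 - u + u^2/2 - exp (-u)) (-1 + u + exp (-u)) u := by
        refine (h2.sub h1).congr_deriv ?_; push_cast; ring
      rw [h.deriv]
      have := Real.add_one_le_exp (-u)
      linarith
  have h0 := key (Set.mem_Ici.mpr le_rfl) (Set.mem_Ici.mpr hs) hs
  simp only [neg_zero, Real.exp_zero] at h0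
  linarith

private lemma cubic_le_exp_neg (s : ℝ) (hs : 0 ≤ s) : 1 - s + s^2/2 - s^3/6 ≤ exp (-s) := by
  have key : MonotoneOn (fun u : ℝ => exp (-u) - (1 - u + u^2/2 - u^3/6)) (Set.Ici 0) := by
    apply monotoneOn_of_deriv_nonneg (convex_Ici 0)
    · fun_prop
    · apply Differentiable.differentiableOn; fun_prop
    · intro u hu
      rw [interior_Ici] at hu
      have h1 : HasDerivAt (fun u : ℝ => exp (-u)) (exp (-u) * (-1)) u :=
        (hasDerivAt_neg u).exp
      have h2 : HasDerivAt (fun u : ℝ => 1 - u + u^2/2 - u^3/6)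
          (-1 + (2:ℕ) * u ^ 1 / 2 - (3:ℕ) * u ^ 2 / 6) u :=
        (((hasDerivAt_id u).const_sub (1:ℝ)).add ((hasDerivAt_pow 2 u).div_const 2)).sub
          ((hasDerivAt_pow 3 u).div_const 6)
      have h : HasDerivAt (fun u : ℝ => exp (-u) - (1 - u + u^2/2 - u^3/6))
          (1 - u + u^2/2 - exp (-u)) u := by
        refine (h1.sub h2).congr_deriv ?_; push_cast; ring
      rw [h.deriv]
      have := exp_neg_le_quad u hu.le
      linarith
  have h0 := key (Set.mem_Ici.mpr le_rfl) (Set.mem_Ici.mpr hs) hs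
  simp only [neg_zero, Real.exp_zero] at h0
  linarith

private lemma pade (t : ℝ) (h0 : 0 ≤ t) (h2 : t ≤ 2) : 2 - t ≤ (2 + t) * exp (-t) := by
  have hs0 : 0 ≤ t / 2 := by linarith
  have hs1 : t / 2 ≤ 1 := by linarith
  have hC : 1 - t/2 + (t/2)^2/2 - (t/2)^3/6 ≤ exp (-(t/2)) := cubic_le_exp_neg (t/2) hs0
  have hCpos : 0 ≤ 1 - t/2 + (t/2)^2/2 - (t/2)^3/6 := by nlinarith
  have hexp : exp (-t) = exp (-(t/2)) * exp (-(t/2)) := by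
    rw [← Real.exp_add]; ring_nf
  rw [hexp]
  have hQ : 0 ≤ 24 - 27*(t/2) + 15*(t/2)^2 - 5*(t/2)^3 + (t/2)^4 := by
    nlinarith [sq_nonneg (t/2), mul_nonneg hs0 (sub_nonneg.mpr hs1),
      mul_nonneg (mul_nonneg hs0 hs0) (sub_nonneg.mpr hs1),
      mul_nonneg (mul_nonneg (mul_nonneg hs0 hs0) hs0) (sub_nonneg.mpr hs1)]
  have hpoly : 2 - t ≤ (2 + t) * ((1 - t/2 + (t/2)^2/2 - (t/2)^3/6) * (1 - t/2 + (t/2)^2/2 - (t/2)^3/6)) := by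
    nlinarith [mul_nonneg (pow_nonneg h0 3) hQ]
  calc 2 - t ≤ _ := hpoly
    _ ≤ (2 + t) * (exp (-(t/2)) * exp (-(t/2))) := by
        have := mul_le_mul hC hC hCpos (Real.exp_pos (-(t/2))).le
        nlinarith

/-- For all `x > 0`, `(1 − e^{−x})(1 − e^{−1/x})(1/x + x) ≤ 1`. -/
theorem relative_coverage_le_one (x : ℝ) (hx : 0 < x) :
    (1 - exp (-x)) * (1 - exp (-(1 / x))) * (1 / x + x) ≤ 1 := by
  have hy : 0 < 1 / x := by positivity
  have hxy : x * (1 / x) = 1 := by field_simp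
  have hE1 : 0 < exp (-x) := Real.exp_pos _
  have hE2 : 0 < exp (-(1 / x)) := Real.exp_pos _
  have hE1' : exp (-x) < 1 := Real.exp_lt_one_iff.mpr (by linarith)
  have hE2' : exp (-(1 / x)) < 1 := Real.exp_lt_one_iff.mpr (by linarith)
  rcases le_or_gt x 2 with hx2 | hx2
  · rcases le_or_gt (1/2 : ℝ) x with hxh | hxh
    · -- middle case : 1/2 ≤ x ≤ 2
      have hy2 : 1 / x ≤ 2 := by rw [div_le_iff₀ hx]; linarith
      have p1 := pade x hx.le hx2
      have p2 := pade (1/x) hy.le hy2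
      have hA : (1 - exp (-x)) * (2 + x) ≤ 2 * x := by nlinarith
      have hB : (1 - exp (-(1/x))) * (2 + 1/x) ≤ 2 * (1/x) := by nlinarith
      have hA0 : 0 ≤ (1 - exp (-x)) * (2 + x) := by nlinarith
      have hB0 : 0 ≤ (1 - exp (-(1/x))) * (2 + 1/x) := by nlinarith
      have hAB : ((1 - exp (-x)) * (2 + x)) * ((1 - exp (-(1/x))) * (2 + 1/x)) ≤ 4 := by
        nlinarith [mul_le_mul hA hB hB0 (by linarith : (0:ℝ) ≤ 2 * x)]
      have hP : 0 ≤ (1 - exp (-x)) * (1 - exp (-(1/x))) := by nlinarith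
      -- (2+x)(2+1/x) = 5 + 2(x + 1/x) ≥ 4(x+1/x) since x+1/x ≤ 5/2
      have hsum : x + 1/x ≤ 5/2 := by
        nlinarith [hxy, mul_pos hx hx, hxh, hx2]
      nlinarith [mul_le_mul_of_nonneg_left hsum hP, hAB, mul_pos hE1 hE2]
    · -- small case : x < 1/2
      have p1 := pade x hx.le hx2
      have key : (1 - exp (-x)) * (2 + x) ≤ 2 * x := by nlinarith
      have hQ : (1 - exp (-x)) * (1/x + x) ≤ 1 := by
        nlinarith [mul_le_mul_of_nonneg_right key (by positivity : (0:ℝ) ≤ 1/x + x)]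
      nlinarith [mul_pos hE1 (by positivity : (0:ℝ) < 1/x + x)]
  · -- large case : x > 2
    have hy2 : 1 / x ≤ 2 := by rw [div_le_iff₀ hx]; linarith
    have hyh : 1 / x ≤ 1/2 := by rw [div_le_iff₀ hx]; linarith
    have p2 := pade (1/x) hy.le hy2
    have key : (1 - exp (-(1/x))) * (2 + 1/x) ≤ 2 * (1/x) := by nlinarith
    have hQ : (1 - exp (-(1/x))) * (1/x + x) ≤ 1 := by
      nlinarith [mul_le_mul_of_nonneg_right key (by positivity : (0:ℝ) ≤ 1/x + x)]
    nlinarith [mul_pos hE2 (by positivity : (0:ℝ) < 1/x + x)]
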